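/- Under the hypotheses of the CLT theorem with κ₂G(0)/2 < 1, the replica overlap R_t = ∑_x ρ_{t,x}², where ρ_{t,x} = η_{t,x}/|η_t| on {|η_t|>0}, satisfies R_t = O(t^{−d/2}) in P(·| |η̄_∞| > 0)-probability; i.e., for every ε > 0 there is M such that limsup_t P(t^{d/2}R_t > M | |η̄_∞| > 0) < ε. -/

import Mathlib

open MeasureTheory

open Filter

lemma meas_tsum_aux {Ω : Type*} [MeasurableSpace Ω] {ι : Type*} [Countable ι]
    (f : Ω → ι → ℝ) (hnn : ∀ ω x, 0 ≤ f ω x) (hsum : ∀ ω, Summable (f ω))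
    (hm : ∀ x, Measurable fun ω => f ω x) : Measurable fun ω => ∑' x, f ω x := by
  have h : (fun ω => ∑' x, f ω x) = fun ω => (∑' x, ENNReal.ofReal (f ω x)).toReal := by
    funext ω
    rw [← ENNReal.ofReal_tsum_of_nonneg (hnn ω) (hsum ω),
      ENNReal.toReal_ofReal (tsum_nonneg (hnn ω))]
  rw [h]
  exact (Measurable.ennreal_tsum fun x => (hm x).ennreal_ofReal).ennreal_toReal

lemma limsupE_aux {Ω : Type*} [MeasurableSpace Ω] (P : Measure Ω) [IsProbabilityMeasure P]
    (S : ℝ → Ω → ℝ) (Minf : Ω → ℝ) (δ : ℝ) (hδ : 0 < δ)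
    (hSmeas : ∀ t, Measurable (S t)) (hMmeas : Measurable Minf)
    (hconv : ∀ᵐ ω ∂P, Tendsto (fun t => S t ω) atTop (nhds (Minf ω))) :
    limsup (fun t => P ({ω | S t ω ≤ δ} ∩ {ω | 2*δ ≤ Minf ω})) atTop = 0 := by
  set E : ℝ → Set Ω := fun t => {ω | S t ω ≤ δ} ∩ {ω | 2*δ ≤ Minf ω} with hE
  by_contra hL
  set L := limsup (fun t => P (E t)) atTop with hLdef
  have h0 : 0 < L := pos_iff_ne_zero.2 hL
  set c : ENNReal := min L 1 / 2 with hcdef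
  have hmin0 : min L 1 ≠ 0 := (lt_min h0 zero_lt_one).ne'
  have hmintop : min L 1 ≠ ⊤ := (lt_of_le_of_lt (min_le_right _ _) ENNReal.one_lt_top).ne
  have hc0 : 0 < c := ENNReal.div_pos hmin0 (by norm_num)
  have hcL : c < L := lt_of_lt_of_le (ENNReal.half_lt_self hmin0 hmintop) (min_le_left _ _)
  have hfreq : ∃ᶠ t in atTop, c < P (E t) := by
    by_contra h
    rw [not_frequently] at h
    have : L ≤ c := limsup_le_of_le (by isBoundedDefault) (h.mono fun t ht => not_lt.1 ht)
    exact absurd this (not_le.2 hcL)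
  rw [frequently_atTop] at hfreq
  choose tt htt hct using fun n : ℕ => hfreq (n : ℝ)
  set U : ℕ → Set Ω := fun n => ⋃ k : ℕ, E (tt (n + k)) with hU
  have hanti : Antitone U := by
    intro m n hmn ω hω
    rw [Set.mem_iUnion] at hω ⊢
    obtain ⟨k, hk⟩ := hω
    exact ⟨(n - m) + k, by rwa [show m + ((n - m) + k) = n + k by omega]⟩
  have hmeasU : ∀ n, MeasurableSet (U n) := fun n =>
    MeasurableSet.iUnion fun k =>
      ((measurableSet_le (hSmeas _) measurable_const).inter
        (measurableSet_le measurable_const hMmeas))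
  have hnull : P (⋂ n, U n) = 0 := by
    refine measure_mono_null ?_ (ae_iff.1 hconv)
    intro ω hω
    simp only [Set.mem_iInter, Set.mem_iUnion, hU] at hω
    simp only [Set.mem_setOf_eq]
    intro htend
    obtain ⟨k0, hk0⟩ := hω 0
    have h2δ : 2*δ ≤ Minf ω := hk0.2
    have hδlt : δ < Minf ω := lt_of_lt_of_le (by linarith) h2δ
    have hev := htend.eventually_const_lt hδlt
    rw [eventually_atTop] at hev
    obtain ⟨T, hT⟩ := hev
    obtain ⟨n, hn⟩ := exists_nat_ge T
    obtain ⟨k, hk⟩ := hω n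
    have hle : T ≤ tt (n + k) := by
      refine le_trans (hn.trans ?_) (htt (n + k))
      exact_mod_cast Nat.le_add_right n k
    exact absurd hk.1 (not_le.2 (hT _ hle))
  have htend0 : Tendsto (fun n => P (U n)) atTop (nhds 0) := by
    have h := tendsto_measure_iInter_atTop (μ := P)
      (fun n => (hmeasU n).nullMeasurableSet) hanti ⟨0, measure_ne_top P _⟩
    rw [hnull] at h
    exact h
  obtain ⟨n, hn⟩ := (htend0.eventually_lt_const hc0).exists
  have hsub : E (tt n) ⊆ U n := by
    intro ω h
    rw [Set.mem_iUnion]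
    exact ⟨0, by simpa using h⟩
  exact absurd (lt_of_lt_of_le (hct n) (measure_mono hsub)) (not_lt.2 hn.le)

/-- Delocalization of the replica overlap: if the total mass `∑_x η̄_{t,x}`
converges a.s. to `M_∞` and `E[∑_x η̄_{t,x}²] ≤ C t^{−d/2}`, then the replica
overlap `R_t = ∑_x ρ_{t,x}²` satisfies `R_t = O(t^{−d/2})` in
`P(·| M_∞ > 0)`-probability: for every `ε > 0` there is `M` with
`limsup_t P(t^{d/2} R_t > M | M_∞ > 0) < ε`. -/
theorem stmt15 {d : ℕ} {Ω : Type*} [MeasurableSpace Ω] (P : Measure Ω)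
    [IsProbabilityMeasure P]
    (η : ℝ → Ω → (Fin d → ℤ) → ℝ)
    (hnn : ∀ t ω x, 0 ≤ η t ω x)
    (hsum : ∀ t ω, Summable (η t ω))
    (hmeas : ∀ t x, Measurable fun ω => η t ω x)
    (Minf : Ω → ℝ) (hMmeas : Measurable Minf) (hMnn : ∀ ω, 0 ≤ Minf ω)
    (hconv : ∀ᵐ ω ∂P, Filter.Tendsto (fun t => ∑' x, η t ω x) Filter.atTop
      (nhds (Minf ω)))
    (hpos : 0 < P {ω | 0 < Minf ω})
    (C : ℝ) (hmom : ∀ t : ℝ, 0 < t →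
      (∫⁻ ω, ENNReal.ofReal (∑' x, (η t ω x) ^ 2) ∂P)
        ≤ ENNReal.ofReal (C * t ^ (-(d:ℝ) / 2)))
    (ρ : ℝ → Ω → (Fin d → ℤ) → ℝ)
    (hρ : ∀ t ω x, ρ t ω x =
      if 0 < ∑' y, η t ω y then η t ω x / ∑' y, η t ω y else 0)
    (R : ℝ → Ω → ℝ) (hR : ∀ t ω, R t ω = ∑' x, (ρ t ω x) ^ 2) :
    ∀ ε : ℝ, 0 < ε → ∃ M : ℝ,
      Filter.limsup
        (fun t : ℝ => ProbabilityTheory.cond P {ω | 0 < Minf ω}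
          {ω | M < t ^ ((d:ℝ) / 2) * R t ω})
        Filter.atTop < ENNReal.ofReal ε := by
  intro ε hε
  set s := {ω | 0 < Minf ω} with hs
  have hms : MeasurableSet s := measurableSet_lt measurable_const hMmeas
  set c := P s with hcdef
  have hcne : c ≠ 0 := hpos.ne'
  have hctop : c ≠ ⊤ := measure_ne_top P s
  set ε₃ : ENNReal := c * ENNReal.ofReal ε with hε₃def
  have hε₃0 : ε₃ ≠ 0 := mul_ne_zero hcne (ENNReal.ofReal_pos.2 hε).ne'
  have hε₃top : ε₃ ≠ ⊤ := ENNReal.mul_ne_top hctop ENNReal.ofReal_ne_top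
  set x := ε₃ / 3 with hxdef
  have hx0 : x ≠ 0 := (ENNReal.div_pos hε₃0 (by norm_num)).ne'
  have hxtop : x ≠ ⊤ := (ENNReal.div_lt_top hε₃top (by norm_num)).ne
  have hx2pos : (0:ENNReal) < x / 2 := ENNReal.div_pos hx0 (by norm_num)
  -- total mass and its measurability
  set S : ℝ → Ω → ℝ := fun t ω => ∑' y, η t ω y with hSdef
  have hSmeas : ∀ t, Measurable (S t) := fun t =>
    meas_tsum_aux (fun ω y => η t ω y) (fun ω y => hnn t ω y) (fun ω => hsum t ω)
      (fun y => hmeas t y)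
  -- summability of squares
  have hsq : ∀ t ω, Summable fun y => (η t ω y)^2 := by
    intro t ω
    refine Summable.of_nonneg_of_le (fun y => sq_nonneg _) (fun y => ?_)
      ((hsum t ω).mul_left (S t ω))
    have h1 : η t ω y ≤ S t ω := (hsum t ω).le_tsum y (fun z _ => hnn t ω z)
    calc (η t ω y)^2 = η t ω y * η t ω y := sq (η t ω y)
      _ ≤ S t ω * η t ω y := mul_le_mul_of_nonneg_right h1 (hnn t ω y)
  -- choose δ
  have hBtend : Tendsto
      (fun n : ℕ => P (s ∩ {ω | Minf ω < 2 * ((n:ℝ)+1)⁻¹})) atTop (nhds 0) := by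
    have hBanti : Antitone (fun n : ℕ => s ∩ {ω | Minf ω < 2 * ((n:ℝ)+1)⁻¹}) := by
      intro m n hmn
      refine Set.inter_subset_inter_right _ (fun ω hω => ?_)
      simp only [Set.mem_setOf_eq] at hω ⊢
      refine lt_of_lt_of_le hω (mul_le_mul_of_nonneg_left ?_ (by norm_num))
      have h1 : (0:ℝ) < (m:ℝ)+1 := by positivity
      exact inv_anti₀ h1 (by exact_mod_cast Nat.add_le_add_right hmn 1)
    have hBempty : (⋂ n : ℕ, s ∩ {ω | Minf ω < 2 * ((n:ℝ)+1)⁻¹}) = ∅ := by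
      rw [Set.eq_empty_iff_forall_notMem]
      intro ω h
      simp only [Set.mem_iInter, Set.mem_inter_iff, Set.mem_setOf_eq] at h
      have h0 : 0 < Minf ω := (h 0).1
      have h0' := h0
      obtain ⟨n, hn⟩ := exists_nat_gt (2 / Minf ω)
      have h2 : Minf ω < 2 * ((n:ℝ)+1)⁻¹ := (h n).2
      have hn1 : (0:ℝ) < (n:ℝ)+1 := by positivity
      rw [div_lt_iff₀ h0] at hn
      have h3 : Minf ω < 2 / ((n:ℝ)+1) := by rwa [div_eq_mul_inv]
      rw [lt_div_iff₀ hn1] at h3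
      nlinarith
    have h := tendsto_measure_iInter_atTop (μ := P)
      (fun n => (hms.inter (measurableSet_lt hMmeas measurable_const)).nullMeasurableSet)
      hBanti ⟨0, measure_ne_top P _⟩
    rw [hBempty] at h
    simpa [Function.comp_def] using h
  obtain ⟨n₀, hn₀⟩ := (hBtend.eventually_lt_const hx2pos).exists
  set δ : ℝ := ((n₀:ℝ)+1)⁻¹ with hδdef
  have hδ : 0 < δ := by positivity
  have hPB : P (s ∩ {ω | Minf ω < 2*δ}) < x/2 := hn₀
  -- choose M
  have hx' : 0 < x.toReal := ENNReal.toReal_pos hx0 hxtop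
  obtain ⟨n₁, hn₁⟩ := exists_nat_gt (C / (x.toReal * δ^2))
  set M : ℝ := (n₁:ℝ)+1 with hMdef
  have hM : 0 < M := by positivity
  have hCM : C / (M * δ^2) < x.toReal := by
    rw [div_lt_iff₀ (by positivity)]
    rcases le_or_gt C 0 with hC | hC
    · nlinarith [mul_pos hx' (mul_pos hM (pow_pos hδ 2))]
    · rw [div_lt_iff₀ (by positivity : (0:ℝ) < x.toReal * δ^2)] at hn₁
      nlinarith [mul_pos hx' (pow_pos hδ 2)]
  -- the squared-mass function in ENNReal
  set G : ℝ → Ω → ENNReal := fun t ω => ∑' y, ENNReal.ofReal ((η t ω y)^2) with hGdef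
  have hGQ : ∀ t ω, G t ω = ENNReal.ofReal (∑' y, (η t ω y)^2) := fun t ω =>
    (ENNReal.ofReal_tsum_of_nonneg (fun y => sq_nonneg _) (hsq t ω)).symm
  -- Markov bound
  have hA : ∀ t : ℝ, 1 ≤ t →
      P {ω | ENNReal.ofReal (t ^ (-(d:ℝ)/2) * (M*δ^2)) ≤ G t ω} ≤ x := by
    intro t ht1
    have ht0 : (0:ℝ) < t := zero_lt_one.trans_le ht1
    have htp : (0:ℝ) < t ^ (-(d:ℝ)/2) := Real.rpow_pos_of_pos ht0 _
    have hGmeas : AEMeasurable (G t) P :=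
      (Measurable.ennreal_tsum fun y =>
        ((hmeas t y).pow_const 2).ennreal_ofReal).aemeasurable
    have hint : ∫⁻ ω, G t ω ∂P ≤ ENNReal.ofReal (C * t ^ (-(d:ℝ)/2)) := by
      calc ∫⁻ ω, G t ω ∂P = ∫⁻ ω, ENNReal.ofReal (∑' y, (η t ω y)^2) ∂P :=
            lintegral_congr (fun ω => hGQ t ω)
        _ ≤ _ := hmom t ht0
    have markov := mul_meas_ge_le_lintegral₀ hGmeas
      (ENNReal.ofReal (t ^ (-(d:ℝ)/2) * (M*δ^2)))
    set a := ENNReal.ofReal (t ^ (-(d:ℝ)/2)) with ha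
    have ha0 : a ≠ 0 := (ENNReal.ofReal_pos.2 htp).ne'
    have hatop : a ≠ ⊤ := ENNReal.ofReal_ne_top
    set u := ENNReal.ofReal (M*δ^2) with hu
    have hu0 : u ≠ 0 := (ENNReal.ofReal_pos.2 (by positivity)).ne'
    have hutop : u ≠ ⊤ := ENNReal.ofReal_ne_top
    have h1 : ENNReal.ofReal (t ^ (-(d:ℝ)/2) * (M*δ^2)) = a * u :=
      ENNReal.ofReal_mul htp.le
    have h2 : ENNReal.ofReal (C * t ^ (-(d:ℝ)/2)) = a * ENNReal.ofReal C := by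
      rw [mul_comm C]; exact ENNReal.ofReal_mul htp.le
    have h3 : (a * u) * P {ω | ENNReal.ofReal (t ^ (-(d:ℝ)/2) * (M*δ^2)) ≤ G t ω}
        ≤ a * ENNReal.ofReal C := by
      rw [← h1, ← h2]; exact markov.trans hint
    have h4 : P {ω | ENNReal.ofReal (t ^ (-(d:ℝ)/2) * (M*δ^2)) ≤ G t ω}
        ≤ (a * ENNReal.ofReal C) / (a * u) := by
      rw [ENNReal.le_div_iff_mul_le (Or.inl (mul_ne_zero ha0 hu0))
        (Or.inl (ENNReal.mul_ne_top hatop hutop)), mul_comm]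
      exact h3
    refine h4.trans ?_
    rw [ENNReal.mul_div_mul_left _ _ ha0 hatop,
      ← ENNReal.ofReal_div_of_pos (by positivity : (0:ℝ) < M*δ^2)]
    calc ENNReal.ofReal (C / (M*δ^2)) ≤ ENNReal.ofReal x.toReal :=
          ENNReal.ofReal_le_ofReal hCM.le
      _ = x := ENNReal.ofReal_toReal hxtop
  -- E term
  have hE0 := limsupE_aux P S Minf δ hδ hSmeas hMmeas hconv
  have hEev : ∀ᶠ t in atTop,
      P ({ω | S t ω ≤ δ} ∩ {ω | 2*δ ≤ Minf ω}) < x/2 :=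
    eventually_lt_of_limsup_lt (by rw [hE0]; exact hx2pos)
  -- main eventual bound
  have hcond : ∀ᶠ t in atTop,
      ProbabilityTheory.cond P s {ω | M < t ^ ((d:ℝ)/2) * R t ω} ≤ c⁻¹ * (x + x) := by
    filter_upwards [hEev, eventually_ge_atTop (1:ℝ)] with t hEt ht1
    have ht0 : (0:ℝ) < t := zero_lt_one.trans_le ht1
    rw [ProbabilityTheory.cond_apply hms]
    refine mul_le_mul' le_rfl ?_
    have hsub : s ∩ {ω | M < t ^ ((d:ℝ)/2) * R t ω} ⊆
        {ω | ENNReal.ofReal (t ^ (-(d:ℝ)/2) * (M*δ^2)) ≤ G t ω} ∪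
        (({ω | S t ω ≤ δ} ∩ {ω | 2*δ ≤ Minf ω}) ∪ (s ∩ {ω | Minf ω < 2*δ})) := by
      rintro ω ⟨hωs, hωT⟩
      rcases lt_or_ge (Minf ω) (2*δ) with h2 | h2
      · exact Or.inr (Or.inr ⟨hωs, h2⟩)
      rcases le_or_gt (S t ω) δ with hSle | hSgt
      · exact Or.inr (Or.inl ⟨hSle, h2⟩)
      left
      have hS0 : 0 < S t ω := hδ.trans hSgt
      have hRval : R t ω = (∑' y, (η t ω y)^2) / (S t ω)^2 := by
        rw [hR]
        have hterm : ∀ y, (ρ t ω y)^2 = (η t ω y)^2 / (S t ω)^2 := fun y => by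
          rw [hρ t ω y, if_pos hS0, div_pow]
        simp_rw [hterm]
        exact tsum_div_const
      have hωT' : M < t ^ ((d:ℝ)/2) * R t ω := hωT
      rw [hRval, ← mul_div_assoc, lt_div_iff₀ (pow_pos hS0 2)] at hωT'
      have hδS : δ^2 ≤ (S t ω)^2 := pow_le_pow_left₀ hδ.le hSgt.le 2
      have h4 : M * δ^2 < t ^ ((d:ℝ)/2) * (∑' y, (η t ω y)^2) := by
        nlinarith [mul_le_mul_of_nonneg_left hδS hM.le]
      have htp : (0:ℝ) < t ^ (-(d:ℝ)/2) := Real.rpow_pos_of_pos ht0 _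
      have h5 := mul_lt_mul_of_pos_left h4 htp
      have hcancel : t ^ (-(d:ℝ)/2) * (t ^ ((d:ℝ)/2) * (∑' y, (η t ω y)^2))
          = ∑' y, (η t ω y)^2 := by
        rw [← mul_assoc, ← Real.rpow_add ht0,
          (by ring : -(d:ℝ)/2 + (d:ℝ)/2 = 0), Real.rpow_zero, one_mul]
      rw [hcancel] at h5
      show ENNReal.ofReal (t ^ (-(d:ℝ)/2) * (M*δ^2)) ≤ G t ω
      rw [hGQ t ω]
      exact ENNReal.ofReal_le_ofReal h5.le
    calc P (s ∩ {ω | M < t ^ ((d:ℝ)/2) * R t ω})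
        ≤ P {ω | ENNReal.ofReal (t ^ (-(d:ℝ)/2) * (M*δ^2)) ≤ G t ω} +
          (P ({ω | S t ω ≤ δ} ∩ {ω | 2*δ ≤ Minf ω}) + P (s ∩ {ω | Minf ω < 2*δ})) :=
          (measure_mono hsub).trans ((measure_union_le _ _).trans
            (add_le_add_right (measure_union_le _ _) _))
      _ ≤ x + (x/2 + x/2) := add_le_add (hA t ht1) (add_le_add hEt.le hPB.le)
      _ = x + x := by rw [ENNReal.add_halves]
  refine ⟨M, lt_of_le_of_lt (limsup_le_of_le (by isBoundedDefault) hcond) ?_⟩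
  have h2x : x + x < ε₃ := by
    have h3 : ε₃ = x + x + x := by
      rw [show x + x + x = x * 3 by ring]
      exact (ENNReal.div_mul_cancel (by norm_num) (by norm_num)).symm
    rw [h3]
    exact ENNReal.lt_add_right (ENNReal.add_ne_top.2 ⟨hxtop, hxtop⟩) hx0
  have hcinv0 : c⁻¹ ≠ 0 := ENNReal.inv_ne_zero.2 hctop
  have hcinvtop : c⁻¹ ≠ ⊤ := ENNReal.inv_ne_top.2 hcne
  calc c⁻¹ * (x + x) < c⁻¹ * ε₃ := (ENNReal.mul_lt_mul_iff_right hcinv0 hcinvtop).2 h2x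
    _ = ENNReal.ofReal ε := by
      rw [hε₃def, ← mul_assoc, ENNReal.inv_mul_cancel hcne hctop, one_mul]
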